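/- Suppose f is L-smooth and bounded below, g is unbiased with E‖g(x)‖² ≤ 2A(f(x) − f_inf) + B‖∇f(x)‖² + C, and 0 < γ ≤ 1/(BL). Then one SGD step satisfies E[f(x_{k+1}) | x_k] − f_inf ≤ (1 + Lγ²A)(f(x_k) − f_inf) − γ(1 − LBγ/2)‖∇f(x_k)‖² + Lγ²C/2. -/

import Mathlib

open MeasureTheory intervalIntegral

local notation "⟪" x ", " y "⟫" => @inner ℝ _ _ x y

lemma descent {d : ℕ} (f : EuclideanSpace ℝ (Fin d) → ℝ) (L : ℝ) (hL : 0 ≤ L)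
    (hdiff : Differentiable ℝ f)
    (hlip : ∀ x y, ‖gradient f x - gradient f y‖ ≤ L * ‖x - y‖)
    (x v : EuclideanSpace ℝ (Fin d)) :
    f (x + v) ≤ f x + ⟪gradient f x, v⟫ + L / 2 * ‖v‖ ^ 2 := by
  set φ : ℝ → ℝ := fun t => f (x + t • v) with hφdef
  have hφ : ∀ t : ℝ, HasDerivAt φ ⟪gradient f (x + t • v), v⟫ t := by
    intro t
    have h1 := (hdiff (x + t • v)).hasGradientAt
    rw [hasGradientAt_iff_hasFDerivAt] at h1
    have h2 : HasDerivAt (fun t : ℝ => x + t • v) v t := by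
      simpa using ((hasDerivAt_id t).smul_const v).const_add x
    have h3 := h1.comp_hasDerivAt t h2
    simpa [InnerProductSpace.toDual_apply_apply, hφdef, Function.comp_def] using h3
  have hcont : Continuous fun t : ℝ => (⟪gradient f (x + t • v), v⟫ : ℝ) := by
    have hlip' : LipschitzWith (Real.toNNReal (L * ‖v‖))
        (fun t : ℝ => gradient f (x + t • v)) := by
      apply LipschitzWith.of_dist_le_mul
      intro s t
      rw [dist_eq_norm, dist_eq_norm]
      calc ‖gradient f (x + s • v) - gradient f (x + t • v)‖
          ≤ L * ‖(x + s • v) - (x + t • v)‖ := hlip _ _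
        _ = L * ‖v‖ * ‖s - t‖ := by
            rw [show (x + s • v) - (x + t • v) = (s - t) • v by module,
              norm_smul]
            simp [Real.norm_eq_abs]; ring
        _ = (Real.toNNReal (L * ‖v‖)) * ‖s - t‖ := by
            rw [Real.coe_toNNReal _ (by positivity)]
    exact (hlip'.continuous).inner continuous_const
  have hint : (∫ t in (0:ℝ)..1, ⟪gradient f (x + t • v), v⟫) = φ 1 - φ 0 :=
    intervalIntegral.integral_eq_sub_of_hasDerivAt (fun t _ => hφ t)
      (hcont.intervalIntegrable 0 1)
  have hmono : (∫ t in (0:ℝ)..1, ⟪gradient f (x + t • v), v⟫)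
      ≤ ∫ t in (0:ℝ)..1, (⟪gradient f x, v⟫ + L * ‖v‖ ^ 2 * t) := by
    apply intervalIntegral.integral_mono_on (by norm_num)
      (hcont.intervalIntegrable 0 1)
      (((by fun_prop : Continuous fun t : ℝ => (⟪gradient f x, v⟫ : ℝ) + L * ‖v‖ ^ 2 * t)).intervalIntegrable 0 1)
    intro t ht
    rw [Set.mem_Icc] at ht
    have h1 : (⟪gradient f (x + t • v), v⟫ : ℝ)
        = ⟪gradient f x, v⟫ + ⟪gradient f (x + t • v) - gradient f x, v⟫ := by
      rw [inner_sub_left]; ring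
    rw [h1]
    have h2 : (⟪gradient f (x + t • v) - gradient f x, v⟫ : ℝ)
        ≤ ‖gradient f (x + t • v) - gradient f x‖ * ‖v‖ := real_inner_le_norm _ _
    have h3 : ‖gradient f (x + t • v) - gradient f x‖ ≤ L * (t * ‖v‖) := by
      have := hlip (x + t • v) x
      simpa [norm_smul, Real.norm_eq_abs, abs_of_nonneg ht.1] using this
    have h4 : ‖gradient f (x + t • v) - gradient f x‖ * ‖v‖ ≤ L * (t * ‖v‖) * ‖v‖ :=
      mul_le_mul_of_nonneg_right h3 (norm_nonneg v)
    nlinarith [norm_nonneg v]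
  have hgen : ∀ c a : ℝ, (∫ t in (0:ℝ)..1, (c + a * t)) = c + a / 2 := by
    intro c a
    rw [intervalIntegral.integral_add intervalIntegrable_const
      ((by fun_prop : Continuous fun t : ℝ => a * t).intervalIntegrable 0 1),
      intervalIntegral.integral_const_mul, integral_id]
    norm_num
    ring
  rw [hgen] at hmono
  have key : φ 1 - φ 0 ≤ ⟪gradient f x, v⟫ + L * ‖v‖ ^ 2 / 2 := by
    rw [← hint]; exact hmono
  have e1 : φ 1 = f (x + v) := by simp [hφdef]
  have e0 : φ 0 = f x := by simp [hφdef]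
  rw [e1, e0] at key
  linarith

theorem stmt12 {d : ℕ} {Ω : Type*} [MeasureSpace Ω]
    [IsProbabilityMeasure (volume : Measure Ω)]
    (f : EuclideanSpace ℝ (Fin d) → ℝ) (L finf A B C : ℝ)
    (hL : 0 < L) (hA : 0 ≤ A) (hB : 0 ≤ B) (hC : 0 ≤ C)
    (hdiff : Differentiable ℝ f)
    (hlip : ∀ x y, ‖gradient f x - gradient f y‖ ≤ L * ‖x - y‖)
    (hbd : ∀ x, finf ≤ f x)
    (γ : ℝ) (hγ0 : 0 < γ) (hγB : γ ≤ 1 / (B * L))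
    (xk : EuclideanSpace ℝ (Fin d)) (g : Ω → EuclideanSpace ℝ (Fin d))
    (hg2 : MemLp g 2 volume)
    (hunb : (∫ ω, g ω) = gradient f xk)
    (hES : (∫ ω, ‖g ω‖ ^ 2) ≤ 2 * A * (f xk - finf) + B * ‖gradient f xk‖ ^ 2 + C) :
    (∫ ω, f (xk - γ • g ω)) - finf
      ≤ (1 + L * γ ^ 2 * A) * (f xk - finf)
        - γ * (1 - L * B * γ / 2) * ‖gradient f xk‖ ^ 2 + L * γ ^ 2 * C / 2 := by
  set G := gradient f xk with hG
  have hpt : ∀ ω, f (xk - γ • g ω)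
      ≤ f xk - γ * ⟪G, g ω⟫ + L * γ ^ 2 / 2 * ‖g ω‖ ^ 2 := by
    intro ω
    have h := descent f L hL.le hdiff hlip xk (-(γ • g ω))
    have e : xk + -(γ • g ω) = xk - γ • g ω := by abel
    have e2 : (⟪G, -(γ • g ω)⟫ : ℝ) = -(γ * ⟪G, g ω⟫) := by
      rw [inner_neg_right, real_inner_smul_right]
    have e3 : ‖-(γ • g ω)‖ ^ 2 = γ ^ 2 * ‖g ω‖ ^ 2 := by
      rw [norm_neg, norm_smul, mul_pow, Real.norm_eq_abs, sq_abs]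
    rw [e, e2, e3] at h
    nlinarith [h]
  have hgi : Integrable g := hg2.integrable (by norm_num)
  have hsq : Integrable (fun ω => ‖g ω‖ ^ 2) := hg2.norm.integrable_sq
  have hinner : Integrable (fun ω => (⟪G, g ω⟫ : ℝ)) := hgi.const_inner G
  have hφint : Integrable
      (fun ω => f xk - γ * ⟪G, g ω⟫ + L * γ ^ 2 / 2 * ‖g ω‖ ^ 2) :=
    ((integrable_const _).sub (hinner.const_mul γ)).add (hsq.const_mul _)
  have hmeas : AEStronglyMeasurable (fun ω => f (xk - γ • g ω)) volume :=
    hdiff.continuous.comp_aestronglyMeasurable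
      (aestronglyMeasurable_const.sub (hg2.aestronglyMeasurable.const_smul γ))
  have hhint : Integrable (fun ω => f (xk - γ • g ω)) := by
    apply Integrable.mono' ((integrable_const |finf|).add hφint.abs) hmeas
    filter_upwards with ω
    rw [Real.norm_eq_abs, abs_le]
    constructor
    · have h1 := hbd (xk - γ • g ω)
      have h2 := abs_nonneg (f xk - γ * ⟪G, g ω⟫ + L * γ ^ 2 / 2 * ‖g ω‖ ^ 2)
      have h3 := neg_abs_le finf
      simp only [Pi.add_apply]
      linarith
    · have h1 := hpt ω
      have h2 := le_abs_self (f xk - γ * ⟪G, g ω⟫ + L * γ ^ 2 / 2 * ‖g ω‖ ^ 2)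
      have h3 := abs_nonneg finf
      simp only [Pi.add_apply]
      linarith
  have hImono := integral_mono hhint hφint hpt
  have hI : (∫ ω, (f xk - γ * ⟪G, g ω⟫ + L * γ ^ 2 / 2 * ‖g ω‖ ^ 2))
      = f xk - γ * ‖G‖ ^ 2 + L * γ ^ 2 / 2 * ∫ ω, ‖g ω‖ ^ 2 := by
    have i1 : Integrable (fun ω => f xk - γ * ⟪G, g ω⟫) volume :=
      (integrable_const _).sub (hinner.const_mul γ)
    have i2 : Integrable (fun ω => L * γ ^ 2 / 2 * ‖g ω‖ ^ 2) volume := hsq.const_mul _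
    have i3 : Integrable (fun _ : Ω => f xk) volume := integrable_const _
    have i4 : Integrable (fun ω => γ * ⟪G, g ω⟫) volume := hinner.const_mul γ
    rw [integral_add i1 i2, integral_sub i3 i4,
      MeasureTheory.integral_const_mul, MeasureTheory.integral_const_mul, integral_inner hgi, hunb,
      real_inner_self_eq_norm_sq, MeasureTheory.integral_const]
    simp
  rw [hI] at hImono
  have hE := mul_le_mul_of_nonneg_left hES (show (0:ℝ) ≤ L * γ ^ 2 / 2 by positivity)
  nlinarith [hImono, hE]
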